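/- arXiv:1902.02044 — 3 statements merged into one kernel-verified Lean document; each statement's English description precedes it below -/
import Mathlib

section
/- Let n ≤ m be positive integers, let A be a real n×n matrix, and let B be a real n×m matrix such that every row of B sums to r and every column of B sums to 2. For real numbers t1, t2, t3, form the (n+m)×(n+m) block matrix M = [[A, B],[Bᵀ, t1·I_m + t2·J_m + t3·BᵀB]]. Then, as polynomials in x, det(x·I_{n+m} − M) = (x − t1)^{m−n} · det( ((x − t1)·I_n − t3·B·Bᵀ − (t2·r/2)·J_n)·(x·I_n − A) − B·Bᵀ ). -/
open Matrix Polynomial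

section Aux

variable {p q : Type*} [Fintype p] [Fintype q] [DecidableEq p] [DecidableEq q]

lemma aux_det_smul_one_sub_mul (u : ℝ) (hu : u ≠ 0) (C : Matrix p q ℝ) (D : Matrix q p ℝ) :
    (u • (1 : Matrix p p ℝ) - C * D).det =
      u ^ Fintype.card p * (1 + ((-u⁻¹) • C) * D).det := by
  have h : u • ((1 : Matrix p p ℝ) + ((-u⁻¹) • C) * D) = u • (1 : Matrix p p ℝ) - C * D := by
    rw [smul_add, Matrix.smul_mul, smul_smul, mul_neg, mul_inv_cancel₀ hu, neg_one_smul,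
      sub_eq_add_neg]
  rw [← h, det_smul]

lemma aux_comm (hle : Fintype.card q ≤ Fintype.card p) (u : ℝ) (hu : u ≠ 0)
    (C : Matrix p q ℝ) (D : Matrix q p ℝ) :
    (u • (1 : Matrix p p ℝ) - C * D).det =
      u ^ (Fintype.card p - Fintype.card q) * (u • (1 : Matrix q q ℝ) - D * C).det := by
  have h2 : u • ((1 : Matrix q q ℝ) + D * ((-u⁻¹) • C)) = u • (1 : Matrix q q ℝ) - D * C := by
    rw [smul_add, Matrix.mul_smul, smul_smul, mul_neg, mul_inv_cancel₀ hu, neg_one_smul,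
      sub_eq_add_neg]
  rw [aux_det_smul_one_sub_mul u hu C D, det_one_add_mul_comm, ← h2, det_smul,
    ← mul_assoc, pow_sub_mul_pow u hle]

lemma aux_eval_charpoly {k : ℕ} (M : Matrix (Fin k) (Fin k) ℝ) (x : ℝ) :
    (Matrix.charpoly M).eval x = (x • (1 : Matrix (Fin k) (Fin k) ℝ) - M).det := by
  rw [Matrix.charpoly, ← Polynomial.coe_evalRingHom, RingHom.map_det]
  congr 1
  ext i j
  by_cases h : i = j
  · subst h
    simp [Matrix.charmatrix_apply_eq, Matrix.one_apply]
  · simp [Matrix.charmatrix_apply_ne _ _ _ h, Matrix.one_apply_ne h]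

end Aux

lemma key_identity (n m : ℕ) (hnm : n ≤ m) (r : ℝ)
    (A : Matrix (Fin n) (Fin n) ℝ) (B : Matrix (Fin n) (Fin m) ℝ)
    (hrow : ∀ i : Fin n, ∑ j : Fin m, B i j = r)
    (hcol : ∀ j : Fin m, ∑ i : Fin n, B i j = 2)
    (t1 t2 t3 : ℝ) (x : ℝ) (hx : x ≠ t1)
    (hA : (x • (1 : Matrix (Fin n) (Fin n) ℝ) - A).det ≠ 0) :
    (x • (1 : Matrix (Fin n ⊕ Fin m) (Fin n ⊕ Fin m) ℝ) -
        Matrix.fromBlocks A B Bᵀ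
          (t1 • (1 : Matrix (Fin m) (Fin m) ℝ) +
            t2 • Matrix.of (fun _ _ => (1 : ℝ)) + t3 • (Bᵀ * B))).det
      = (x - t1) ^ (m - n) *
        ((((x - t1) • (1 : Matrix (Fin n) (Fin n) ℝ) - t3 • (B * Bᵀ) -
              (t2 * r / 2) • Matrix.of (fun _ _ => (1 : ℝ))) *
            (x • (1 : Matrix (Fin n) (Fin n) ℝ) - A)) - B * Bᵀ).det := by
  have hu : x - t1 ≠ 0 := sub_ne_zero.mpr hx
  set Jnm : Matrix (Fin n) (Fin m) ℝ := Matrix.of (fun _ _ => (1 : ℝ)) with hJnm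
  set Jn : Matrix (Fin n) (Fin n) ℝ := Matrix.of (fun _ _ => (1 : ℝ)) with hJn
  set Jm : Matrix (Fin m) (Fin m) ℝ := Matrix.of (fun _ _ => (1 : ℝ)) with hJm
  set K : Matrix (Fin n) (Fin n) ℝ := B * Bᵀ with hK
  set W : Matrix (Fin n) (Fin m) ℝ := (t2 / 2) • Jnm + t3 • B with hW
  set S : Matrix (Fin n) (Fin n) ℝ :=
    (x - t1) • (1 : Matrix (Fin n) (Fin n) ℝ) - t3 • K - (t2 * r / 2) • Jn with hS
  set Cm : Matrix (Fin n ⊕ Fin m) (Fin n ⊕ Fin n) ℝ := Matrix.fromBlocks 1 0 0 Bᵀ with hCm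
  set Dm : Matrix (Fin n ⊕ Fin n) (Fin n ⊕ Fin m) ℝ :=
    Matrix.fromBlocks (Aᵀ - t1 • 1) B 1 W with hDm
  set P : Matrix (Fin n) (Fin n) ℝ := x • (1 : Matrix (Fin n) (Fin n) ℝ) - Aᵀ with hP
  -- transpose of the big matrix
  have hDblkT : (t1 • (1 : Matrix (Fin m) (Fin m) ℝ) + t2 • Jm + t3 • (Bᵀ * B))ᵀ
      = t1 • (1 : Matrix (Fin m) (Fin m) ℝ) + t2 • Jm + t3 • (Bᵀ * B) := by
    have : Jmᵀ = Jm := by ext i j; simp [hJm]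
    simp [transpose_add, transpose_smul, transpose_mul, transpose_transpose, transpose_one, this]
  have h1 : (x • (1 : Matrix (Fin n ⊕ Fin m) (Fin n ⊕ Fin m) ℝ) -
      Matrix.fromBlocks A B Bᵀ
        (t1 • (1 : Matrix (Fin m) (Fin m) ℝ) + t2 • Jm + t3 • (Bᵀ * B)))ᵀ
      = x • (1 : Matrix (Fin n ⊕ Fin m) (Fin n ⊕ Fin m) ℝ) -
      Matrix.fromBlocks Aᵀ B Bᵀ
        (t1 • (1 : Matrix (Fin m) (Fin m) ℝ) + t2 • Jm + t3 • (Bᵀ * B)) := by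
    rw [transpose_sub, transpose_smul, transpose_one, fromBlocks_transpose, transpose_transpose,
      hDblkT]
  -- C * D computation
  have hBJ : Bᵀ * Jnm = (2 : ℝ) • Jm := by
    ext i j
    simp only [Matrix.mul_apply, Matrix.transpose_apply, hJnm, Matrix.of_apply, mul_one,
      Matrix.smul_apply, hJm, smul_eq_mul]
    rw [hcol i]
  have hJB : Jnm * Bᵀ = r • Jn := by
    ext i j
    simp only [Matrix.mul_apply, Matrix.transpose_apply, hJnm, Matrix.of_apply, one_mul,
      Matrix.smul_apply, hJn, smul_eq_mul]
    rw [hrow j]; ring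
  have hBW : Bᵀ * W = t2 • Jm + t3 • (Bᵀ * B) := by
    rw [hW, Matrix.mul_add, Matrix.mul_smul, Matrix.mul_smul, hBJ, smul_smul]
    norm_num
  have hWB : W * Bᵀ = (t2 * r / 2) • Jn + t3 • K := by
    rw [hW, Matrix.add_mul, Matrix.smul_mul, Matrix.smul_mul, hJB, smul_smul, hK]
    ring_nf
  have hCD : Cm * Dm = Matrix.fromBlocks (Aᵀ - t1 • 1) B Bᵀ
      (t2 • Jm + t3 • (Bᵀ * B)) := by
    rw [hCm, hDm, fromBlocks_multiply]
    simp [hBW]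
  have hDC : Dm * Cm = Matrix.fromBlocks (Aᵀ - t1 • 1) K 1 ((t2 * r / 2) • Jn + t3 • K) := by
    rw [hCm, hDm, fromBlocks_multiply]
    simp [hWB, hK]
  have h2 : x • (1 : Matrix (Fin n ⊕ Fin m) (Fin n ⊕ Fin m) ℝ) -
      Matrix.fromBlocks Aᵀ B Bᵀ
        (t1 • (1 : Matrix (Fin m) (Fin m) ℝ) + t2 • Jm + t3 • (Bᵀ * B))
      = (x - t1) • (1 : Matrix (Fin n ⊕ Fin m) (Fin n ⊕ Fin m) ℝ) - Cm * Dm := by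
    rw [hCD]
    ext i j
    rcases i with i | i <;> rcases j with j | j <;>
      simp [Matrix.one_apply, Matrix.sub_apply, Matrix.smul_apply, Matrix.add_apply,
        smul_eq_mul] <;> split_ifs <;> ring
  have h4 : (x - t1) • (1 : Matrix (Fin n ⊕ Fin n) (Fin n ⊕ Fin n) ℝ) - Dm * Cm
      = Matrix.fromBlocks P (-K) (-1) S := by
    rw [hDC]
    ext i j
    rcases i with i | i <;> rcases j with j | j <;>
      simp [hP, hS, Matrix.one_apply, Matrix.sub_apply, Matrix.smul_apply, Matrix.add_apply,
        Matrix.neg_apply, smul_eq_mul] <;> split_ifs <;> ring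
  -- invertibility
  have hPdet : IsUnit P.det := by
    have hPT : P = (x • (1 : Matrix (Fin n) (Fin n) ℝ) - A)ᵀ := by
      rw [transpose_sub, transpose_smul, transpose_one, hP]
    rw [hPT, det_transpose]
    exact isUnit_iff_ne_zero.mpr hA
  haveI : Invertible P := invertibleOfIsUnitDet P hPdet
  have hcard : Fintype.card (Fin n ⊕ Fin n) ≤ Fintype.card (Fin n ⊕ Fin m) := by
    simp [Fintype.card_sum]; omega
  have hcardeq : Fintype.card (Fin n ⊕ Fin m) - Fintype.card (Fin n ⊕ Fin n) = m - n := by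
    simp [Fintype.card_sum]; omega
  calc
    (x • (1 : Matrix (Fin n ⊕ Fin m) (Fin n ⊕ Fin m) ℝ) -
        Matrix.fromBlocks A B Bᵀ
          (t1 • (1 : Matrix (Fin m) (Fin m) ℝ) + t2 • Jm + t3 • (Bᵀ * B))).det
        = ((x • (1 : Matrix (Fin n ⊕ Fin m) (Fin n ⊕ Fin m) ℝ) -
        Matrix.fromBlocks A B Bᵀ
          (t1 • (1 : Matrix (Fin m) (Fin m) ℝ) + t2 • Jm + t3 • (Bᵀ * B)))ᵀ).det := by
        rw [det_transpose]
    _ = ((x - t1) • (1 : Matrix (Fin n ⊕ Fin m) (Fin n ⊕ Fin m) ℝ) - Cm * Dm).det := by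
        rw [h1, h2]
    _ = (x - t1) ^ (m - n) *
        ((x - t1) • (1 : Matrix (Fin n ⊕ Fin n) (Fin n ⊕ Fin n) ℝ) - Dm * Cm).det := by
        rw [aux_comm hcard (x - t1) hu Cm Dm, hcardeq]
    _ = (x - t1) ^ (m - n) * (Matrix.fromBlocks P (-K) (-1) S).det := by rw [h4]
    _ = (x - t1) ^ (m - n) * (P.det * (S - (-1) * ⅟P * (-K)).det) := by
        rw [det_fromBlocks₁₁]
    _ = (x - t1) ^ (m - n) * (P * S - K).det := by
        rw [Matrix.neg_mul, Matrix.one_mul, Matrix.mul_neg, Matrix.neg_mul, neg_neg, ← det_mul,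
          Matrix.mul_sub, ← Matrix.mul_assoc, mul_invOf_self, Matrix.one_mul]
    _ = (x - t1) ^ (m - n) * (S * (x • (1 : Matrix (Fin n) (Fin n) ℝ) - A) - K).det := by
        congr 1
        rw [← det_transpose (P * S - K)]
        congr 1
        have hST : Sᵀ = S := by
          have hJT : Jnᵀ = Jn := by ext i j; simp [hJn]
          have hKT : Kᵀ = K := by rw [hK, transpose_mul, transpose_transpose]
          rw [hS]
          simp [transpose_sub, transpose_smul, transpose_one, hJT, hKT]
        have hKT : Kᵀ = K := by rw [hK, transpose_mul, transpose_transpose]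
        rw [transpose_sub, transpose_mul, hST, hKT, hP, transpose_sub, transpose_smul,
          transpose_one, transpose_transpose]

/-- Row/column-sum block determinant identity. -/
theorem stmt_0 (n m : ℕ) (hn : 0 < n) (hnm : n ≤ m) (r : ℝ)
    (A : Matrix (Fin n) (Fin n) ℝ) (B : Matrix (Fin n) (Fin m) ℝ)
    (hrow : ∀ i : Fin n, ∑ j : Fin m, B i j = r)
    (hcol : ∀ j : Fin m, ∑ i : Fin n, B i j = 2)
    (t1 t2 t3 : ℝ) (x : ℝ) :
    (x • (1 : Matrix (Fin n ⊕ Fin m) (Fin n ⊕ Fin m) ℝ) -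
        Matrix.fromBlocks A B Bᵀ
          (t1 • (1 : Matrix (Fin m) (Fin m) ℝ) +
            t2 • Matrix.of (fun _ _ => (1 : ℝ)) + t3 • (Bᵀ * B))).det
      = (x - t1) ^ (m - n) *
        ((((x - t1) • (1 : Matrix (Fin n) (Fin n) ℝ) - t3 • (B * Bᵀ) -
              (t2 * r / 2) • Matrix.of (fun _ _ => (1 : ℝ))) *
            (x • (1 : Matrix (Fin n) (Fin n) ℝ) - A)) - B * Bᵀ).det := by
  set f : ℝ → ℝ := fun y =>
    (y • (1 : Matrix (Fin n ⊕ Fin m) (Fin n ⊕ Fin m) ℝ) -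
        Matrix.fromBlocks A B Bᵀ
          (t1 • (1 : Matrix (Fin m) (Fin m) ℝ) +
            t2 • Matrix.of (fun _ _ => (1 : ℝ)) + t3 • (Bᵀ * B))).det with hf_def
  set g : ℝ → ℝ := fun y =>
    (y - t1) ^ (m - n) *
        ((((y - t1) • (1 : Matrix (Fin n) (Fin n) ℝ) - t3 • (B * Bᵀ) -
              (t2 * r / 2) • Matrix.of (fun _ _ => (1 : ℝ))) *
            (y • (1 : Matrix (Fin n) (Fin n) ℝ) - A)) - B * Bᵀ).det with hg_def
  have hf : Continuous f := by
    apply Continuous.matrix_det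
    exact (continuous_id.smul continuous_const).sub continuous_const
  have hg : Continuous g := by
    apply Continuous.mul
    · exact (continuous_id.sub continuous_const).pow _
    · apply Continuous.matrix_det
      apply Continuous.sub _ continuous_const
      apply Continuous.matrix_mul
      · exact ((((continuous_id.sub continuous_const).smul continuous_const).sub
          continuous_const).sub continuous_const)
      · exact (continuous_id.smul continuous_const).sub continuous_const
  have hne : Matrix.charpoly A ≠ 0 := (Matrix.charpoly_monic A).ne_zero
  have hcnt : ({y : ℝ | (Matrix.charpoly A).IsRoot y} ∪ {t1} : Set ℝ).Countable :=
    ((Polynomial.finite_setOf_isRoot hne).union (Set.finite_singleton t1)).countable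
  have hdense : Dense (({y : ℝ | (Matrix.charpoly A).IsRoot y} ∪ {t1} : Set ℝ)ᶜ) :=
    hcnt.dense_compl ℝ
  have heq : Set.EqOn f g (({y : ℝ | (Matrix.charpoly A).IsRoot y} ∪ {t1} : Set ℝ)ᶜ) := by
    intro y hy
    simp only [Set.mem_compl_iff, Set.mem_union, Set.mem_setOf_eq, Set.mem_singleton_iff,
      not_or] at hy
    have hy1 : (y • (1 : Matrix (Fin n) (Fin n) ℝ) - A).det ≠ 0 := by
      rw [← aux_eval_charpoly A y]
      exact hy.1
    exact key_identity n m hnm r A B hrow hcol t1 t2 t3 y hy.2 hy1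
  have := hf.ext_on hdense hg heq
  exact congrFun this x
end

section
/- Let G be an r-regular graph (r ≥ 2) with n vertices and m = nr/2 edges, and let H be a regular graph on the same n vertices whose adjacency matrix commutes with that of G. Let x_1 = n^{-1/2}·𝟙, x_2, …, x_n be an orthonormal basis of ℝⁿ consisting of common eigenvectors of L(G) and L(H), with L(G)x_i = μ_i(G)x_i and L(H)x_i = μ_i(H)x_i (so μ_1(G) = μ_1(H) = 0). For real numbers t1, t2, t3, let M = [[L(H) + r·I_n, B(G)],[B(G)ᵀ, t1·I_m + t2·J_m + t3·B(G)ᵀB(G)]]. Then det(x·I_{n+m} − M) = (x − t1)^{m−n} · (x² − (r + t1 + 2r·t3 + m·t2)x + r(t1 + 2r·t3 + m·t2) − 2r) · ∏_{i=2}^{n} ( x² − (r + μ_i(H) + t1 + t3(2r − μ_i(G)))x + (r + μ_i(H))(t1 + t3(2r − μ_i(G))) − (2r − μ_i(G)) ). -/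
open Matrix SimpleGraph

/-- The `n × m` vertex–edge incidence matrix of a graph, relative to an
enumeration `e` of its edges. -/
noncomputable def incMat {V : Type} [Fintype V] [DecidableEq V] {m : ℕ}
    (G : SimpleGraph V) [Fintype G.edgeSet] (e : Fin m ≃ G.edgeFinset) :
    Matrix V (Fin m) ℝ :=
  Matrix.of fun i j => if i ∈ (e j : Sym2 V) then (1 : ℝ) else 0

section Aux

lemma detblock {n m : ℕ} (C : Matrix (Fin m) (Fin n) ℝ) (d f δ : Fin n → ℝ)
    (hD : Cᵀ * C = Matrix.diagonal d) (y : ℝ) (hy : y ≠ 0)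
    (hfd : ∀ i, y - f i * d i ≠ 0) (hmn : n ≤ m) :
    (Matrix.fromBlocks (Matrix.diagonal δ) (-Cᵀ) (-C)
        (y • (1 : Matrix (Fin m) (Fin m) ℝ) - C * Matrix.diagonal f * Cᵀ)).det
      = y ^ (m - n) * ∏ i, (δ i * (y - f i * d i) - d i) := by
  set F : Matrix (Fin n) (Fin n) ℝ := Matrix.diagonal f with hF
  set K : Matrix (Fin n) (Fin n) ℝ := Matrix.diagonal (fun i => (y - f i * d i)⁻¹) with hKdef
  set W : Matrix (Fin m) (Fin m) ℝ := y • 1 - C * F * Cᵀ with hW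
  have hyd : y • (1 : Matrix (Fin n) (Fin n) ℝ) - F * Matrix.diagonal d
      = Matrix.diagonal (fun i => y - f i * d i) := by
    rw [hF, diagonal_mul_diagonal, smul_one_eq_diagonal, diagonal_sub]
  have hK : (y • (1 : Matrix (Fin n) (Fin n) ℝ) - F * Matrix.diagonal d) * K = 1 := by
    rw [hyd, hKdef, diagonal_mul_diagonal]
    have h : (fun i => (y - f i * d i) * (y - f i * d i)⁻¹) = fun _ : Fin n => (1 : ℝ) :=
      funext fun i => mul_inv_cancel₀ (hfd i)
    rw [h, diagonal_one]
  have h1 : W * (C * K) = C := by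
    have e1 : W * (C * K) = C * (y • K) - C * (F * (Matrix.diagonal d * K)) := by
      rw [hW, Matrix.sub_mul, Matrix.smul_mul, Matrix.one_mul, Matrix.mul_smul]
      congr 1
      rw [Matrix.mul_assoc (C * F) Cᵀ, ← Matrix.mul_assoc Cᵀ C K, hD,
        Matrix.mul_assoc C F]
    rw [e1, ← Matrix.mul_sub]
    have e2 : y • K - F * (Matrix.diagonal d * K)
        = (y • (1 : Matrix (Fin n) (Fin n) ℝ) - F * Matrix.diagonal d) * K := by
      rw [Matrix.sub_mul, Matrix.smul_mul, Matrix.one_mul, Matrix.mul_assoc]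
    rw [e2, hK, Matrix.mul_one]
  have hdet1 : (Matrix.fromBlocks (1 : Matrix (Fin n) (Fin n) ℝ) 0 (C * K)
      (1 : Matrix (Fin m) (Fin m) ℝ)).det = 1 := by
    rw [Matrix.det_fromBlocks_zero₁₂]; simp
  have c11 : Matrix.diagonal δ * (1 : Matrix (Fin n) (Fin n) ℝ) + -Cᵀ * (C * K) = Matrix.diagonal δ - Matrix.diagonal d * K := by
    rw [Matrix.mul_one, Matrix.neg_mul, ← Matrix.mul_assoc, hD, ← sub_eq_add_neg]
  have c12 : Matrix.diagonal δ * (0 : Matrix (Fin n) (Fin m) ℝ) + -Cᵀ * (1 : Matrix (Fin m) (Fin m) ℝ) = -Cᵀ := by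
    rw [Matrix.mul_zero, Matrix.mul_one, zero_add]
  have c21 : -C * (1 : Matrix (Fin n) (Fin n) ℝ) + W * (C * K) = (0 : Matrix (Fin m) (Fin n) ℝ) := by
    rw [Matrix.mul_one, h1, neg_add_cancel]
  have c22 : -C * (0 : Matrix (Fin n) (Fin m) ℝ) + W * (1 : Matrix (Fin m) (Fin m) ℝ) = W := by
    rw [Matrix.mul_zero, Matrix.mul_one, zero_add]
  have step : (Matrix.fromBlocks (Matrix.diagonal δ) (-Cᵀ) (-C) W).det
      = (Matrix.fromBlocks (Matrix.diagonal δ - Matrix.diagonal d * K) (-Cᵀ)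
          (0 : Matrix (Fin m) (Fin n) ℝ) W).det := by
    conv_lhs => rw [← mul_one (Matrix.fromBlocks (Matrix.diagonal δ) (-Cᵀ) (-C) W).det,
      ← hdet1, ← Matrix.det_mul]
    rw [Matrix.fromBlocks_multiply, c11, c12, c21, c22]
  have detA : (Matrix.diagonal δ - Matrix.diagonal d * K).det
      = ∏ i, (δ i - d i * (y - f i * d i)⁻¹) := by
    rw [hKdef, diagonal_mul_diagonal, diagonal_sub, det_diagonal]
  have e3 : W = y • ((1 : Matrix (Fin m) (Fin m) ℝ) + C * ((-y⁻¹) • (F * Cᵀ))) := by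
    have : y • ((1 : Matrix (Fin m) (Fin m) ℝ) + C * ((-y⁻¹) • (F * Cᵀ)))
        = y • (1 : Matrix (Fin m) (Fin m) ℝ) + (y * -y⁻¹) • (C * (F * Cᵀ)) := by
      rw [smul_add, Matrix.mul_smul, smul_smul]
    rw [this, mul_neg, mul_inv_cancel₀ hy, neg_one_smul, ← sub_eq_add_neg, hW,
      Matrix.mul_assoc]
  have detW : W.det = y ^ m * ∏ i, (1 - y⁻¹ * (f i * d i)) := by
    rw [e3, Matrix.det_smul, Matrix.det_one_add_mul_comm]
    congr 1
    · simp
    rw [Matrix.smul_mul, Matrix.mul_assoc, hD, hF, diagonal_mul_diagonal,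
      ← diagonal_smul, ← diagonal_one, diagonal_add, det_diagonal]
    exact Finset.prod_congr rfl fun i _ => by simp [Pi.smul_apply]; ring
  have key : ∀ i : Fin n, (y * (1 - y⁻¹ * (f i * d i))) * (δ i - d i * (y - f i * d i)⁻¹)
      = δ i * (y - f i * d i) - d i := by
    intro i
    have h2 : y * (1 - y⁻¹ * (f i * d i)) = y - f i * d i := by
      field_simp
    rw [h2, mul_sub, mul_comm (y - f i * d i) (δ i)]
    congr 1
    rw [mul_comm (d i), ← mul_assoc, mul_inv_cancel₀ (hfd i), one_mul]
  have hprodkey : ∏ i, ((y * (1 - y⁻¹ * (f i * d i))) * (δ i - d i * (y - f i * d i)⁻¹))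
      = ∏ i, (δ i * (y - f i * d i) - d i) :=
    Finset.prod_congr rfl fun i _ => key i
  have hsplit : ∏ i, ((y * (1 - y⁻¹ * (f i * d i))) * (δ i - d i * (y - f i * d i)⁻¹))
      = (∏ _i : Fin n, y) * (∏ i, (1 - y⁻¹ * (f i * d i)))
        * ∏ i, (δ i - d i * (y - f i * d i)⁻¹) := by
    rw [← Finset.prod_mul_distrib, ← Finset.prod_mul_distrib]
  have hym : y ^ m = y ^ (m - n) * y ^ n := by rw [← pow_add, Nat.sub_add_cancel hmn]
  have hyn : (y : ℝ) ^ n = ∏ _i : Fin n, y := by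
    rw [Finset.prod_const, Finset.card_univ, Fintype.card_fin]
  rw [step, Matrix.det_fromBlocks_zero₂₁, detA, detW, ← hprodkey, hsplit, hym, ← hyn]
  ring

lemma incMat_eq_incMatrix {V : Type} [Fintype V] [DecidableEq V] {m : ℕ}
    (G : SimpleGraph V) [DecidableRel G.Adj] [Fintype G.edgeSet] (e : Fin m ≃ G.edgeFinset)
    (i : V) (j : Fin m) : incMat G e i j = G.incMatrix ℝ i ((e j : Sym2 V)) := by
  classical
  have hmem : ((e j : Sym2 V)) ∈ G.edgeSet := by
    have := (e j).2
    rwa [SimpleGraph.mem_edgeFinset] at this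
  rw [incMat, SimpleGraph.incMatrix_apply, Set.indicator_apply]
  simp only [Matrix.of_apply, Pi.one_apply, SimpleGraph.incidenceSet, Set.mem_setOf_eq,
    Set.mem_sep_iff]
  by_cases h : i ∈ (e j : Sym2 V) <;> simp [h, hmem]

lemma sum_over_edges {V : Type} [Fintype V] [DecidableEq V] {m : ℕ}
    (G : SimpleGraph V) [Fintype G.edgeSet] (e : Fin m ≃ G.edgeFinset)
    (F : Sym2 V → ℝ) (hF : ∀ s, s ∉ G.edgeFinset → F s = 0) :
    ∑ j : Fin m, F ((e j : Sym2 V)) = ∑ s : Sym2 V, F s := by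
  rw [Fintype.sum_equiv e (fun j => F ((e j : Sym2 V))) (fun s => F (s : Sym2 V)) (fun j => rfl)]
  rw [Finset.sum_coe_sort G.edgeFinset F]
  exact Finset.sum_subset (Finset.subset_univ _) (fun s _ hs => hF s hs)

lemma incMat_mul_transpose {n r : ℕ} {m : ℕ} (G : SimpleGraph (Fin n)) [DecidableRel G.Adj]
    [Fintype G.edgeSet] (hG : G.IsRegularOfDegree r) (e : Fin m ≃ G.edgeFinset) :
    incMat G e * (incMat G e)ᵀ = G.adjMatrix ℝ + (r : ℝ) • 1 := by
  ext a b
  have h1 : (incMat G e * (incMat G e)ᵀ) a b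
      = ∑ j : Fin m, G.incMatrix ℝ a ((e j : Sym2 (Fin n))) * G.incMatrix ℝ b ((e j : Sym2 (Fin n))) := by
    simp only [Matrix.mul_apply, Matrix.transpose_apply]
    exact Finset.sum_congr rfl fun j _ => by rw [incMat_eq_incMatrix, incMat_eq_incMatrix]
  have h2 : ∑ j : Fin m, G.incMatrix ℝ a ((e j : Sym2 (Fin n))) * G.incMatrix ℝ b ((e j : Sym2 (Fin n)))
      = ∑ s : Sym2 (Fin n), G.incMatrix ℝ a s * G.incMatrix ℝ b s := by
    refine sum_over_edges G e (fun s => G.incMatrix ℝ a s * G.incMatrix ℝ b s) ?_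
    intro s hs
    have : G.incMatrix ℝ a s = 0 := by
      apply SimpleGraph.incMatrix_of_notMem_incidenceSet
      intro hmem
      exact hs (SimpleGraph.mem_edgeFinset.mpr hmem.1)
    show G.incMatrix ℝ a s * G.incMatrix ℝ b s = 0
    rw [this, zero_mul]
  have h3 : (G.incMatrix ℝ * (G.incMatrix ℝ)ᵀ) a b
      = if a = b then (G.degree a : ℝ) else if G.Adj a b then 1 else 0 := by
    rw [SimpleGraph.incMatrix_mul_transpose, Matrix.of_apply]
  rw [h1, h2]
  have h4 : ∑ s : Sym2 (Fin n), G.incMatrix ℝ a s * G.incMatrix ℝ b s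
      = (G.incMatrix ℝ * (G.incMatrix ℝ)ᵀ) a b := by
    simp [Matrix.mul_apply, Matrix.transpose_apply]
  rw [h4, h3]
  by_cases hab : a = b
  · subst hab
    simp [hG a, Matrix.one_apply]
  · simp [hab, Matrix.one_apply, SimpleGraph.adjMatrix_apply]

lemma incMat_col_sum {n : ℕ} {m : ℕ} (G : SimpleGraph (Fin n))
    [Fintype G.edgeSet] (e : Fin m ≃ G.edgeFinset) (j : Fin m) :
    ∑ i : Fin n, incMat G e i j = 2 := by
  classical
  have hmem : ((e j : Sym2 (Fin n))) ∈ G.edgeSet := by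
    have := (e j).2
    rwa [SimpleGraph.mem_edgeFinset] at this
  have := SimpleGraph.sum_incMatrix_apply_of_mem_edgeSet (R := ℝ) (G := G) hmem
  calc ∑ i : Fin n, incMat G e i j
      = ∑ i : Fin n, G.incMatrix ℝ i ((e j : Sym2 (Fin n))) :=
        Finset.sum_congr rfl fun i _ => incMat_eq_incMatrix G e i j
    _ = 2 := this

end Aux

theorem stmt_1 (n m r : ℕ) (hr : 2 ≤ r) (hn : 0 < n) (hm : n * r = 2 * m)
    (G H : SimpleGraph (Fin n)) [DecidableRel G.Adj] [DecidableRel H.Adj]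
    [Fintype G.edgeSet]
    (hG : G.IsRegularOfDegree r) (rH : ℕ) (hH : H.IsRegularOfDegree rH)
    (hcomm : G.adjMatrix ℝ * H.adjMatrix ℝ = H.adjMatrix ℝ * G.adjMatrix ℝ)
    (e : Fin m ≃ G.edgeFinset)
    (v : Fin n → (Fin n → ℝ)) (μG μH : Fin n → ℝ)
    (hortho : ∀ i j, v i ⬝ᵥ v j = if i = j then 1 else 0)
    (hv0 : ∀ k, v ⟨0, hn⟩ k = 1 / Real.sqrt n)
    (heigG : ∀ i, (G.lapMatrix ℝ).mulVec (v i) = μG i • v i)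
    (heigH : ∀ i, (H.lapMatrix ℝ).mulVec (v i) = μH i • v i)
    (hμG0 : μG ⟨0, hn⟩ = 0) (hμH0 : μH ⟨0, hn⟩ = 0)
    (t1 t2 t3 : ℝ) (x : ℝ) :
    (x • (1 : Matrix (Fin n ⊕ Fin m) (Fin n ⊕ Fin m) ℝ) -
        Matrix.fromBlocks (H.lapMatrix ℝ + (r : ℝ) • 1) (incMat G e) (incMat G e)ᵀ
          (t1 • (1 : Matrix (Fin m) (Fin m) ℝ) +
            t2 • Matrix.of (fun _ _ => (1 : ℝ)) +
            t3 • ((incMat G e)ᵀ * incMat G e))).det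
      = (x - t1) ^ (m - n) *
          (x ^ 2 - ((r : ℝ) + t1 + 2 * (r : ℝ) * t3 + (m : ℝ) * t2) * x +
            (r : ℝ) * (t1 + 2 * (r : ℝ) * t3 + (m : ℝ) * t2) - 2 * (r : ℝ)) *
          ∏ i ∈ Finset.univ.erase (⟨0, hn⟩ : Fin n),
            (x ^ 2 - ((r : ℝ) + μH i + t1 + t3 * (2 * (r : ℝ) - μG i)) * x +
              ((r : ℝ) + μH i) * (t1 + t3 * (2 * (r : ℝ) - μG i)) -
              (2 * (r : ℝ) - μG i)) := by
  classical
  set z : Fin n := ⟨0, hn⟩ with hzdef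
  set B : Matrix (Fin n) (Fin m) ℝ := incMat G e with hBdef
  set P : Matrix (Fin n) (Fin n) ℝ := Matrix.of (fun i j => v j i) with hPdef
  set C : Matrix (Fin m) (Fin n) ℝ := Bᵀ * P with hCdef
  set d : Fin n → ℝ := fun i => 2 * (r : ℝ) - μG i with hddef
  set f : Fin n → ℝ := fun i => if i = z then t3 + (n : ℝ) * t2 / 4 else t3 with hfdef
  set M : Matrix (Fin n ⊕ Fin m) (Fin n ⊕ Fin m) ℝ :=
    Matrix.fromBlocks (H.lapMatrix ℝ + (r : ℝ) • 1) B Bᵀ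
      (t1 • (1 : Matrix (Fin m) (Fin m) ℝ) + t2 • Matrix.of (fun _ _ => (1 : ℝ)) +
        t3 • (Bᵀ * B)) with hMdef
  set Q : Matrix (Fin n ⊕ Fin m) (Fin n ⊕ Fin m) ℝ :=
    Matrix.fromBlocks P 0 0 (1 : Matrix (Fin m) (Fin m) ℝ) with hQdef
  have hnr : (n : ℝ) * r = 2 * m := by exact_mod_cast hm
  have hmn : n ≤ m := by
    have h1 : n * 2 ≤ n * r := Nat.mul_le_mul_left n hr
    omega
  have hnne : (n : ℝ) ≠ 0 := Nat.cast_ne_zero.mpr hn.ne'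
  have hsqrt : Real.sqrt n * Real.sqrt n = (n : ℝ) := Real.mul_self_sqrt (Nat.cast_nonneg n)
  -- orthogonality of P
  have hPtP : Pᵀ * P = 1 := by
    ext i j
    have h := hortho i j
    simpa [Matrix.mul_apply, Matrix.transpose_apply, Matrix.one_apply, dotProduct, hPdef]
      using h
  have hPPt : P * Pᵀ = 1 := mul_eq_one_comm.mp hPtP
  -- eigen relations as matrix identities
  have hLPgen : ∀ (L : Matrix (Fin n) (Fin n) ℝ) (μ : Fin n → ℝ),
      (∀ i, L.mulVec (v i) = μ i • v i) → L * P = P * Matrix.diagonal μ := by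
    intro L μ h
    ext i j
    have h2 := congrFun (h j) i
    simp only [Matrix.mulVec, dotProduct, Pi.smul_apply, smul_eq_mul] at h2
    rw [Matrix.mul_apply, Matrix.mul_diagonal]
    simp only [hPdef, Matrix.of_apply]
    rw [mul_comm (v j i) (μ j)]
    exact h2
  -- incidence matrix identities
  have hBBt : B * Bᵀ = G.adjMatrix ℝ + (r : ℝ) • 1 := incMat_mul_transpose G hG e
  have hdeg : ∀ w : Fin n, ((G.degree w : ℝ)) = (r : ℝ) := fun w => by rw [hG w]
  have hlap : G.lapMatrix ℝ = (r : ℝ) • 1 - G.adjMatrix ℝ := by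
    rw [SimpleGraph.lapMatrix]
    congr 1
    have hfun : (fun w : Fin n => ((G.degree w : ℝ))) = fun _ => (r : ℝ) := funext hdeg
    rw [SimpleGraph.degMatrix, hfun, smul_one_eq_diagonal]
  have hBBt2 : B * Bᵀ = (2 * (r : ℝ)) • 1 - G.lapMatrix ℝ := by
    rw [hBBt, hlap]
    module
  have hct : Cᵀ = Pᵀ * B := by rw [hCdef, Matrix.transpose_mul, Matrix.transpose_transpose]
  have hCtC : Cᵀ * C = Matrix.diagonal d := by
    rw [hct, hCdef]
    have e1 : Pᵀ * B * (Bᵀ * P) = Pᵀ * (B * Bᵀ * P) := by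
      rw [Matrix.mul_assoc Pᵀ B, ← Matrix.mul_assoc B Bᵀ P]
    rw [e1, hBBt2, Matrix.sub_mul, Matrix.smul_mul, Matrix.one_mul,
      hLPgen (G.lapMatrix ℝ) μG heigG, Matrix.mul_sub, Matrix.mul_smul,
      ← Matrix.mul_assoc, hPtP, Matrix.one_mul, smul_one_eq_diagonal, diagonal_sub]
  have hCCt : C * Cᵀ = Bᵀ * B := by
    rw [hct, hCdef, Matrix.mul_assoc, ← Matrix.mul_assoc P Pᵀ B, hPPt, Matrix.one_mul]
  -- the distinguished column of C
  have hCz : ∀ k : Fin m, C k z = 2 / Real.sqrt n := by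
    intro k
    have e1 : C k z = ∑ i : Fin n, B i k * v z i := by
      rw [hCdef, Matrix.mul_apply]
      exact Finset.sum_congr rfl fun i _ => by
        rw [Matrix.transpose_apply, hPdef, Matrix.of_apply]
    rw [e1]
    have e2 : ∀ i : Fin n, B i k * v z i = B i k * (1 / Real.sqrt n) := fun i => by
      rw [hv0 i]
    rw [Finset.sum_congr rfl fun i _ => e2 i, ← Finset.sum_mul, hBdef, incMat_col_sum G e k]
    ring
  -- the bottom-right perturbation as C F Cᵀ
  have hN : t2 • Matrix.of (fun _ _ => (1 : ℝ)) + t3 • (Bᵀ * B)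
      = C * Matrix.diagonal f * Cᵀ := by
    ext k l
    have e1 : (C * Matrix.diagonal f * Cᵀ) k l = ∑ i : Fin n, C k i * f i * C l i := by
      rw [Matrix.mul_apply]
      exact Finset.sum_congr rfl fun i _ => by
        rw [Matrix.mul_diagonal, Matrix.transpose_apply]
    have e2 : ∀ i : Fin n, C k i * f i * C l i
        = t3 * (C k i * C l i) + (if i = z then (n : ℝ) * t2 / 4 * (C k i * C l i) else 0) := by
      intro i
      rw [hfdef]
      by_cases h : i = z
      · simp only [h, if_pos rfl, if_true]
        ring
      · simp only [if_neg h]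
        ring
    have e3 : ∑ i : Fin n, C k i * f i * C l i
        = t3 * (∑ i : Fin n, C k i * C l i) + (n : ℝ) * t2 / 4 * (C k z * C l z) := by
      rw [Finset.sum_congr rfl fun i _ => e2 i, Finset.sum_add_distrib, ← Finset.mul_sum,
        Finset.sum_ite_eq' Finset.univ z _, if_pos (Finset.mem_univ z)]
    have e4 : ∑ i : Fin n, C k i * C l i = (Bᵀ * B) k l := by
      rw [← hCCt, Matrix.mul_apply]
      exact Finset.sum_congr rfl fun i _ => by rw [Matrix.transpose_apply]
    have e5 : (n : ℝ) * t2 / 4 * (C k z * C l z) = t2 := by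
      rw [hCz k, hCz l]
      have hs : Real.sqrt n ≠ 0 := by
        intro h0
        rw [h0, mul_zero] at hsqrt
        exact hnne hsqrt.symm
      field_simp
      linear_combination (-4 * t2) * hsqrt
    rw [Matrix.add_apply, Matrix.smul_apply, Matrix.smul_apply, Matrix.of_apply,
      smul_eq_mul, smul_eq_mul, mul_one, e1, e3, e4, e5]
    ring
  -- conjugation by Q
  have hQt : Qᵀ = Matrix.fromBlocks Pᵀ 0 0 (1 : Matrix (Fin m) (Fin m) ℝ) := by
    rw [hQdef, Matrix.fromBlocks_transpose, Matrix.transpose_zero, Matrix.transpose_zero,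
      Matrix.transpose_one]
  have hQQ : Qᵀ * Q = 1 := by
    rw [hQt, hQdef, Matrix.fromBlocks_multiply]
    simp only [Matrix.mul_zero, Matrix.zero_mul, Matrix.mul_one, Matrix.one_mul, add_zero,
      zero_add, hPtP, Matrix.mul_zero]
    exact Matrix.fromBlocks_one
  have hdetQ : ∀ X : Matrix (Fin n ⊕ Fin m) (Fin n ⊕ Fin m) ℝ, (Qᵀ * X * Q).det = X.det := by
    intro X
    rw [Matrix.det_mul, Matrix.det_mul]
    have h1 : Qᵀ.det * Q.det = 1 := by rw [← Matrix.det_mul, hQQ, Matrix.det_one]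
    calc Qᵀ.det * X.det * Q.det = Qᵀ.det * Q.det * X.det := by ring
      _ = X.det := by rw [h1, one_mul]
  have hb11 : Pᵀ * (H.lapMatrix ℝ + (r : ℝ) • 1) * P
      = Matrix.diagonal (fun i => μH i + (r : ℝ)) := by
    rw [Matrix.mul_add, Matrix.add_mul, Matrix.mul_assoc Pᵀ (H.lapMatrix ℝ) P,
      hLPgen (H.lapMatrix ℝ) μH heigH, ← Matrix.mul_assoc, hPtP, Matrix.one_mul,
      Matrix.mul_smul, Matrix.mul_one, Matrix.smul_mul, hPtP, smul_one_eq_diagonal,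
      diagonal_add]
  have hMQ : Qᵀ * M * Q = Matrix.fromBlocks (Matrix.diagonal (fun i => μH i + (r : ℝ))) Cᵀ C
      (t1 • (1 : Matrix (Fin m) (Fin m) ℝ) + C * Matrix.diagonal f * Cᵀ) := by
    rw [hQt, hMdef, hQdef, Matrix.fromBlocks_multiply, Matrix.fromBlocks_multiply]
    simp only [Matrix.mul_zero, Matrix.zero_mul, Matrix.mul_one, Matrix.one_mul, add_zero,
      zero_add]
    rw [hb11, ← hct, hCdef, add_assoc, hN]
  -- the key determinant identity, for every x'
  have key : ∀ x' : ℝ,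
      (x' • (1 : Matrix (Fin n ⊕ Fin m) (Fin n ⊕ Fin m) ℝ) - M).det
        = (Matrix.fromBlocks (Matrix.diagonal (fun i => x' - (μH i + (r : ℝ)))) (-Cᵀ) (-C)
            ((x' - t1) • (1 : Matrix (Fin m) (Fin m) ℝ) - C * Matrix.diagonal f * Cᵀ)).det := by
    intro x'
    rw [← hdetQ (x' • 1 - M)]
    congr 1
    have e1 : Qᵀ * (x' • (1 : Matrix (Fin n ⊕ Fin m) (Fin n ⊕ Fin m) ℝ) - M) * Q
        = x' • (Qᵀ * Q) - Qᵀ * M * Q := by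
      rw [Matrix.mul_sub, Matrix.sub_mul, Matrix.mul_smul, Matrix.smul_mul, Matrix.mul_one]
    rw [e1, hQQ, hMQ]
    have e2 : x' • (1 : Matrix (Fin n ⊕ Fin m) (Fin n ⊕ Fin m) ℝ)
        = Matrix.fromBlocks (x' • (1 : Matrix (Fin n) (Fin n) ℝ)) 0 0
            (x' • (1 : Matrix (Fin m) (Fin m) ℝ)) := by
      rw [← Matrix.fromBlocks_one, Matrix.fromBlocks_smul, smul_zero, smul_zero]
    have c1 : x' • (1 : Matrix (Fin n) (Fin n) ℝ)
        + -(Matrix.diagonal (fun i => μH i + (r : ℝ)))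
        = Matrix.diagonal (fun i => x' - (μH i + (r : ℝ))) := by
      rw [smul_one_eq_diagonal, diagonal_neg, diagonal_add]
      simp [sub_eq_add_neg]
    have c3 : x' • (1 : Matrix (Fin m) (Fin m) ℝ)
        + -(t1 • (1 : Matrix (Fin m) (Fin m) ℝ) + C * Matrix.diagonal f * Cᵀ)
        = (x' - t1) • (1 : Matrix (Fin m) (Fin m) ℝ) - C * Matrix.diagonal f * Cᵀ := by
      module
    rw [e2, sub_eq_add_neg, Matrix.fromBlocks_neg, Matrix.fromBlocks_add, zero_add, zero_add,
      c1, c3]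
  -- generic evaluation
  have good : ∀ x' : ℝ, x' ∉ (insert t1 (Set.range fun i => t1 + f i * d i) : Set ℝ) →
      (x' • (1 : Matrix (Fin n ⊕ Fin m) (Fin n ⊕ Fin m) ℝ) - M).det
        = (x' - t1) ^ (m - n)
          * ∏ i, ((x' - (μH i + (r : ℝ))) * ((x' - t1) - f i * d i) - d i) := by
    intro x' hx'
    simp only [Set.mem_insert_iff, Set.mem_range, not_or, not_exists] at hx'
    have hy : x' - t1 ≠ 0 := sub_ne_zero_of_ne hx'.1
    have hfd : ∀ i, (x' - t1) - f i * d i ≠ 0 := by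
      intro i h
      exact hx'.2 i (by linarith)
    rw [key x', detblock C d f (fun i => x' - (μH i + (r : ℝ))) hCtC (x' - t1) hy hfd hmn]
  -- algebraic identification of the product
  have halg : ∀ x' : ℝ,
      (x' - t1) ^ (m - n)
          * ∏ i, ((x' - (μH i + (r : ℝ))) * ((x' - t1) - f i * d i) - d i)
      = (x' - t1) ^ (m - n) *
          (x' ^ 2 - ((r : ℝ) + t1 + 2 * (r : ℝ) * t3 + (m : ℝ) * t2) * x' +
            (r : ℝ) * (t1 + 2 * (r : ℝ) * t3 + (m : ℝ) * t2) - 2 * (r : ℝ)) *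
          ∏ i ∈ Finset.univ.erase z,
            (x' ^ 2 - ((r : ℝ) + μH i + t1 + t3 * (2 * (r : ℝ) - μG i)) * x' +
              ((r : ℝ) + μH i) * (t1 + t3 * (2 * (r : ℝ) - μG i)) -
              (2 * (r : ℝ) - μG i)) := by
    intro x'
    rw [← Finset.mul_prod_erase Finset.univ
      (fun i => (x' - (μH i + (r : ℝ))) * ((x' - t1) - f i * d i) - d i) (Finset.mem_univ z)]
    have hfz : f z = t3 + (n : ℝ) * t2 / 4 := by rw [hfdef]; simp
    have hdz : d z = 2 * (r : ℝ) := by rw [hddef]; simp [hμG0]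
    have hz2 : (x' - (μH z + (r : ℝ))) * ((x' - t1) - f z * d z) - d z
        = x' ^ 2 - ((r : ℝ) + t1 + 2 * (r : ℝ) * t3 + (m : ℝ) * t2) * x' +
            (r : ℝ) * (t1 + 2 * (r : ℝ) * t3 + (m : ℝ) * t2) - 2 * (r : ℝ) := by
      rw [hfz, hdz, hμH0]
      linear_combination (-(t2 * (x' - (r : ℝ))) / 2) * hnr
    have hprod : (∏ i ∈ Finset.univ.erase z,
          ((x' - (μH i + (r : ℝ))) * ((x' - t1) - f i * d i) - d i))
        = ∏ i ∈ Finset.univ.erase z,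
            (x' ^ 2 - ((r : ℝ) + μH i + t1 + t3 * (2 * (r : ℝ) - μG i)) * x' +
              ((r : ℝ) + μH i) * (t1 + t3 * (2 * (r : ℝ) - μG i)) -
              (2 * (r : ℝ) - μG i)) := by
      apply Finset.prod_congr rfl
      intro i hi
      have hiz : i ≠ z := Finset.ne_of_mem_erase hi
      have hfi : f i = t3 := by rw [hfdef]; simp [hiz]
      rw [hfi, hddef]
      ring
    rw [hz2, hprod]
    ring
  -- continuity and density
  have cont1 : Continuous fun x' : ℝ =>
      (x' • (1 : Matrix (Fin n ⊕ Fin m) (Fin n ⊕ Fin m) ℝ) - M).det := by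
    apply Continuous.matrix_det
    apply continuous_matrix
    intro i j
    simp only [Matrix.sub_apply, Matrix.smul_apply, smul_eq_mul]
    fun_prop
  have cont2 : Continuous fun x' : ℝ =>
      (x' - t1) ^ (m - n) *
          (x' ^ 2 - ((r : ℝ) + t1 + 2 * (r : ℝ) * t3 + (m : ℝ) * t2) * x' +
            (r : ℝ) * (t1 + 2 * (r : ℝ) * t3 + (m : ℝ) * t2) - 2 * (r : ℝ)) *
          ∏ i ∈ Finset.univ.erase z,
            (x' ^ 2 - ((r : ℝ) + μH i + t1 + t3 * (2 * (r : ℝ) - μG i)) * x' +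
              ((r : ℝ) + μH i) * (t1 + t3 * (2 * (r : ℝ) - μG i)) -
              (2 * (r : ℝ) - μG i)) := by
    apply Continuous.mul
    · apply Continuous.mul
      · fun_prop
      · fun_prop
    · apply continuous_finset_prod
      intro i _
      fun_prop
  have hSc : (insert t1 (Set.range fun i => t1 + f i * d i) : Set ℝ).Countable :=
    (Set.countable_range _).insert t1
  have hdense : Dense ((insert t1 (Set.range fun i => t1 + f i * d i) : Set ℝ))ᶜ :=
    Set.Countable.dense_compl ℝ hSc
  have hfun := Continuous.ext_on hdense cont1 cont2 (fun x' hx' => by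
    rw [good x' hx', halg x'])
  exact congrFun hfun x
end

section
/- Let p ≥ 2 and let H be a spanning r-regular subgraph of the complete bipartite graph K_{p,p}. Let μ_3, …, μ_{2p} be the Laplacian eigenvalues of H remaining after removing one copy of 0 and one copy of 2r (0 is a Laplacian eigenvalue of H with the all-ones eigenvector, and 2r is a Laplacian eigenvalue of H with eigenvector (𝟙_p, −𝟙_p) since H is bipartite r-regular). Then the characteristic polynomial of the Laplacian of [S(K_{p,p})]^{H}, namely of the block matrix [[L(H) + p·I_{2p}, −B(K_{p,p})],[−B(K_{p,p})ᵀ, 2·I_{p²}]], equals x·(x − (p+2))·(x − (p+2r))·(x − 2)^{p²−2p+1} · ∏_{i=3}^{2p} ( x² − (p + μ_i + 2)x + 2μ_i + p ). -/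
open Matrix SimpleGraph

instance (p q : ℕ) : DecidableRel (completeBipartiteGraph (Fin p) (Fin q)).Adj := by
  intro a b; unfold completeBipartiteGraph; dsimp; infer_instance

lemma kpp_degree (p : ℕ) (u : Fin p ⊕ Fin p) :
    (completeBipartiteGraph (Fin p) (Fin p)).degree u = p := by
  cases u with
  | inl a =>
    have h : (completeBipartiteGraph (Fin p) (Fin p)).neighborFinset (Sum.inl a)
        = Finset.univ.map ⟨Sum.inr, Sum.inr_injective⟩ := by
      ext w; cases w <;> simp [mem_neighborFinset]
    rw [← card_neighborFinset_eq_degree, h]; simp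
  | inr b =>
    have h : (completeBipartiteGraph (Fin p) (Fin p)).neighborFinset (Sum.inr b)
        = Finset.univ.map ⟨Sum.inl, Sum.inl_injective⟩ := by
      ext w; cases w <;> simp [mem_neighborFinset]
    rw [← card_neighborFinset_eq_degree, h]; simp

lemma incMat_mul_transpose_eq {V : Type} [Fintype V] [DecidableEq V] {m : ℕ}
    (G : SimpleGraph V) [DecidableRel G.Adj] [Fintype G.edgeSet]
    (e : Fin m ≃ G.edgeFinset) :
    incMat G e * (incMat G e)ᵀ = G.incMatrix ℝ * (G.incMatrix ℝ)ᵀ := by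
  ext a b
  have key : ∀ (j : Fin m) (a : V),
      G.incMatrix ℝ a (e j) = if a ∈ ((e j : G.edgeFinset) : Sym2 V) then 1 else 0 := by
    intro j a
    have he : ((e j : G.edgeFinset) : Sym2 V) ∈ G.edgeSet := by
      have := (e j).2; rwa [mem_edgeFinset] at this
    rw [incMatrix_apply']
    by_cases h : a ∈ ((e j : G.edgeFinset) : Sym2 V) <;>
      simp [h, SimpleGraph.incidenceSet, he]
  simp only [mul_apply, transpose_apply, incMat, of_apply]
  have h1 : ∑ j : Fin m, (if a ∈ ((e j : G.edgeFinset) : Sym2 V) then (1:ℝ) else 0) *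
        (if b ∈ ((e j : G.edgeFinset) : Sym2 V) then (1:ℝ) else 0)
      = ∑ j : Fin m, G.incMatrix ℝ a (e j) * G.incMatrix ℝ b (e j) := by
    simp [key]
  rw [h1, Equiv.sum_comp e (fun s : G.edgeFinset => G.incMatrix ℝ a s * G.incMatrix ℝ b s)]
  rw [Finset.sum_coe_sort G.edgeFinset (fun s => G.incMatrix ℝ a s * G.incMatrix ℝ b s)]
  rw [Finset.sum_subset (Finset.subset_univ G.edgeFinset)]
  intro s _ hs
  have : G.incMatrix ℝ a s = 0 := by
    apply G.incMatrix_of_notMem_incidenceSet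
    intro hmem
    exact hs (mem_edgeFinset.2 hmem.1)
  rw [this, zero_mul]

lemma bbt (p : ℕ) {m : ℕ} (e : Fin m ≃ (completeBipartiteGraph (Fin p) (Fin p)).edgeFinset) :
    incMat _ e * (incMat _ e)ᵀ
      = (p : ℝ) • 1 + (completeBipartiteGraph (Fin p) (Fin p)).adjMatrix ℝ := by
  rw [incMat_mul_transpose_eq, SimpleGraph.incMatrix_mul_transpose]
  ext a b
  by_cases hab : a = b
  · subst hab; simp [kpp_degree, Matrix.one_apply]
  · simp [hab, Matrix.one_apply]

lemma adj_mulVec (p : ℕ) (f : (Fin p ⊕ Fin p) → ℝ) :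
    ((completeBipartiteGraph (Fin p) (Fin p)).adjMatrix ℝ).mulVec f
      = Sum.elim (fun _ => ∑ b, f (Sum.inr b)) (fun _ => ∑ a, f (Sum.inl a)) := by
  funext u
  cases u with
  | inl a => simp [mulVec, dotProduct, Fintype.sum_sum_type, adjMatrix_apply]
  | inr b => simp [mulVec, dotProduct, Fintype.sum_sum_type, adjMatrix_apply]

/-- If every `v (φ k)` is an eigenvector of `M`, then `M * P = P * diagonal`. -/
lemma mul_eigen {V ι : Type} [Fintype V] [Fintype ι] [DecidableEq V] [DecidableEq ι]
    (M : Matrix V V ℝ) (v : ι → V → ℝ) (g : ι → ℝ) (φ : V ≃ ι)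
    (h : ∀ i, M.mulVec (v i) = g i • v i) :
    M * (Matrix.of fun (u : V) (k : V) => v (φ k) u)
      = (Matrix.of fun (u : V) (k : V) => v (φ k) u) * Matrix.diagonal (fun k => g (φ k)) := by
  ext u k
  rw [Matrix.mul_diagonal]
  have := congrFun (h (φ k)) u
  simp only [Matrix.mulVec, dotProduct, Pi.smul_apply, smul_eq_mul] at this
  simp only [mul_apply, of_apply]
  rw [this]; ring

set_option maxHeartbeats 1000000 in
/-- `L`-characteristic polynomial of $[S(K_{p,p})]^{H}$. -/
theorem stmt_6 (p r : ℕ) (hp : 2 ≤ p)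
    (H : SimpleGraph (Fin p ⊕ Fin p)) [DecidableRel H.Adj]
    (hH : H.IsRegularOfDegree r)
    (hsub : H ≤ completeBipartiteGraph (Fin p) (Fin p))
    (e : Fin (p * p) ≃ (completeBipartiteGraph (Fin p) (Fin p)).edgeFinset)
    (v : Fin (2 * p) → (Fin p ⊕ Fin p) → ℝ) (μ : Fin (2 * p) → ℝ)
    (hortho : ∀ i j, v i ⬝ᵥ v j = if i = j then 1 else 0)
    (heig : ∀ i, (H.lapMatrix ℝ).mulVec (v i) = μ i • v i)
    (hv0 : ∀ u, v ⟨0, by omega⟩ u = 1 / Real.sqrt (2 * p))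
    (hv1 : v ⟨1, by omega⟩ =
      Sum.elim (fun _ => 1 / Real.sqrt (2 * p)) (fun _ => -(1 / Real.sqrt (2 * p))))
    (hμ0 : μ ⟨0, by omega⟩ = 0) (hμ1 : μ ⟨1, by omega⟩ = 2 * r)
    (x : ℝ) :
    (x • (1 : Matrix ((Fin p ⊕ Fin p) ⊕ Fin (p * p)) ((Fin p ⊕ Fin p) ⊕ Fin (p * p)) ℝ) -
        Matrix.fromBlocks (H.lapMatrix ℝ + (p : ℝ) • 1)
          (-(incMat (completeBipartiteGraph (Fin p) (Fin p)) e))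
          (-(incMat (completeBipartiteGraph (Fin p) (Fin p)) e)ᵀ)
          ((2 : ℝ) • (1 : Matrix (Fin (p * p)) (Fin (p * p)) ℝ))).det
      = x * (x - ((p : ℝ) + 2)) * (x - ((p : ℝ) + 2 * (r : ℝ))) *
          (x - 2) ^ (p * p - 2 * p + 1) *
          ∏ i ∈ (Finset.univ.erase (⟨0, by omega⟩ : Fin (2 * p))).erase ⟨1, by omega⟩,
            (x ^ 2 - ((p : ℝ) + μ i + 2) * x + 2 * μ i + (p : ℝ)) := by
  classical
  set G := completeBipartiteGraph (Fin p) (Fin p) with hGdef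
  set B := incMat G e with hBdef
  set L := H.lapMatrix ℝ with hLdef
  set i0 : Fin (2*p) := ⟨0, by omega⟩ with hi0def
  set i1 : Fin (2*p) := ⟨1, by omega⟩ with hi1def
  have hi01 : i1 ≠ i0 := by simp [hi0def, hi1def, Fin.ext_iff]
  set c0 : ℝ := 1 / Real.sqrt (2 * p) with hc0def
  have hc0 : c0 ≠ 0 := by
    have : (0:ℝ) < 2 * p := by positivity
    have := Real.sqrt_pos.2 this
    positivity
  -- eigenvalues of the adjacency matrix of K_{p,p} on the v i
  set a : Fin (2*p) → ℝ := fun i => if i = i0 then (p:ℝ) else if i = i1 then -(p:ℝ) else 0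
    with hadef
  have hAv : ∀ i, ((G.adjMatrix ℝ).mulVec (v i)) = a i • v i := by
    intro i
    show ((completeBipartiteGraph (Fin p) (Fin p)).adjMatrix ℝ).mulVec (v i) = a i • v i
    rw [adj_mulVec]
    by_cases h0 : i = i0
    · subst h0
      funext u
      cases u with
      | inl j => simp [hv0, hadef, Finset.sum_const, mul_comm]
      | inr j => simp [hv0, hadef, Finset.sum_const, mul_comm]
    by_cases h1 : i = i1
    · subst h1
      funext u
      cases u with
      | inl j => simp [hv1, hadef, hi01, Finset.sum_const, mul_comm]
      | inr j => simp [hv1, hadef, hi01, Finset.sum_const, mul_comm]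
    · -- orthogonality with v i0 and v i1 forces both partial sums to vanish
      have ho0 := hortho i i0
      have ho1 := hortho i i1
      rw [if_neg h0] at ho0
      rw [if_neg h1] at ho1
      simp only [dotProduct, Fintype.sum_sum_type] at ho0 ho1
      rw [hv1] at ho1
      simp only [hv0, Sum.elim_inl, Sum.elim_inr] at ho0 ho1
      have hS0 : (∑ j, v i (Sum.inl j)) + (∑ j, v i (Sum.inr j)) = 0 := by
        have : ((∑ j, v i (Sum.inl j)) + (∑ j, v i (Sum.inr j))) * c0 = 0 := by
          rw [← ho0]; rw [add_mul, Finset.sum_mul, Finset.sum_mul]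
        exact (mul_eq_zero.1 this).resolve_right hc0
      have hS1 : (∑ j, v i (Sum.inl j)) - (∑ j, v i (Sum.inr j)) = 0 := by
        have : ((∑ j, v i (Sum.inl j)) - (∑ j, v i (Sum.inr j))) * c0 = 0 := by
          rw [← ho1, sub_mul, Finset.sum_mul, Finset.sum_mul]
          rw [sub_eq_add_neg, ← Finset.sum_neg_distrib]
          congr 1
          apply Finset.sum_congr rfl
          intro j _; ring
        exact (mul_eq_zero.1 this).resolve_right hc0
      have h1' : (∑ j, v i (Sum.inl j)) = 0 := by linarith
      have h2' : (∑ j, v i (Sum.inr j)) = 0 := by linarith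
      funext u
      cases u with
      | inl j => simp [h2', hadef, h0, h1]
      | inr j => simp [h1', hadef, h0, h1]
  -- the orthogonal change of basis
  set φ : (Fin p ⊕ Fin p) ≃ Fin (2*p) := finSumFinEquiv.trans (finCongr (by omega)) with hφdef
  set P : Matrix (Fin p ⊕ Fin p) (Fin p ⊕ Fin p) ℝ :=
    Matrix.of (fun u k => v (φ k) u) with hPdef
  have hPtP : Pᵀ * P = 1 := by
    ext k k'
    simp only [mul_apply, transpose_apply, hPdef, of_apply, Matrix.one_apply]
    have h := hortho (φ k) (φ k')
    simp only [dotProduct] at h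
    rw [h]
    simp [φ.injective.eq_iff]
  have hdetP : Pᵀ.det * P.det = 1 := by rw [← det_mul, hPtP, det_one]
  have hLP : L * P = P * Matrix.diagonal (fun k => μ (φ k)) := mul_eigen L v μ φ heig
  have hAP : (G.adjMatrix ℝ) * P = P * Matrix.diagonal (fun k => a (φ k)) :=
    mul_eigen _ v a φ hAv
  have hm2p : 2 * p ≤ p * p := by nlinarith
  have hcard : ((Finset.univ.erase i0).erase i1).card = 2 * p - 2 := by
    rw [Finset.card_erase_of_mem, Finset.card_erase_of_mem]
    · simp only [Finset.card_univ, Fintype.card_fin]; omega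
    · exact Finset.mem_univ _
    · exact Finset.mem_erase.2 ⟨hi01, Finset.mem_univ _⟩
  have key : ∀ y : ℝ, y ≠ 2 →
      (y • (1 : Matrix ((Fin p ⊕ Fin p) ⊕ Fin (p * p)) ((Fin p ⊕ Fin p) ⊕ Fin (p * p)) ℝ) -
        Matrix.fromBlocks (L + (p : ℝ) • 1) (-B) (-Bᵀ) ((2 : ℝ) • 1)).det
      = y * (y - ((p : ℝ) + 2)) * (y - ((p : ℝ) + 2 * (r : ℝ))) *
          (y - 2) ^ (p * p - 2 * p + 1) *
          ∏ i ∈ (Finset.univ.erase i0).erase i1,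
            (y ^ 2 - ((p : ℝ) + μ i + 2) * y + 2 * μ i + (p : ℝ)) := by
    intro y hy
    have hy2 : y - 2 ≠ 0 := sub_ne_zero.2 hy
    have hsplit : y • (1 : Matrix ((Fin p ⊕ Fin p) ⊕ Fin (p * p)) ((Fin p ⊕ Fin p) ⊕ Fin (p * p)) ℝ) -
        Matrix.fromBlocks (L + (p : ℝ) • 1) (-B) (-Bᵀ) ((2 : ℝ) • 1)
        = Matrix.fromBlocks (y • 1 - (L + (p:ℝ) • 1)) B Bᵀ ((y - 2) • 1) := by
      ext i j
      cases i <;> cases j <;>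
        simp [Matrix.one_apply, Matrix.sub_apply, Matrix.smul_apply, sub_smul,
          Sum.inl.injEq, Sum.inr.injEq, apply_ite (fun t : ℝ => y * t), mul_ite] <;>
        split_ifs <;> ring
    rw [hsplit]
    letI : Invertible ((y - 2) • (1 : Matrix (Fin (p * p)) (Fin (p * p)) ℝ)) :=
      ⟨(y - 2)⁻¹ • (1 : Matrix (Fin (p * p)) (Fin (p * p)) ℝ), by
        rw [Matrix.smul_mul, Matrix.mul_smul, smul_smul, one_mul, inv_mul_cancel₀ hy2, one_smul], by
        rw [Matrix.smul_mul, Matrix.mul_smul, smul_smul, one_mul, mul_inv_cancel₀ hy2, one_smul]⟩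
    rw [Matrix.det_fromBlocks₂₂]
    have hinv : ⅟((y - 2) • (1 : Matrix (Fin (p * p)) (Fin (p * p)) ℝ)) = (y - 2)⁻¹ • 1 := rfl
    rw [hinv]
    have hdetD : ((y - 2) • (1 : Matrix (Fin (p * p)) (Fin (p * p)) ℝ)).det = (y - 2) ^ (p * p) := by
      rw [Matrix.det_smul, det_one, mul_one, Fintype.card_fin]
    rw [hdetD]
    -- the Schur complement
    set M : Matrix (Fin p ⊕ Fin p) (Fin p ⊕ Fin p) ℝ :=
      y • 1 - (L + (p:ℝ) • 1) - B * ((y - 2)⁻¹ • (1 : Matrix (Fin (p * p)) (Fin (p * p)) ℝ)) * Bᵀ with hMdef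
    set d : Fin (2*p) → ℝ := fun i => y - p - μ i - (y - 2)⁻¹ * ((p:ℝ) + a i) with hddef
    have hMP : M * P = P * Matrix.diagonal (fun k => d (φ k)) := by
      have hBB : B * ((y - 2)⁻¹ • (1 : Matrix (Fin (p * p)) (Fin (p * p)) ℝ)) * Bᵀ = (y - 2)⁻¹ • ((p:ℝ) • 1 + G.adjMatrix ℝ) := by
        rw [Matrix.mul_smul, Matrix.mul_one, Matrix.smul_mul, hBdef, bbt]
      rw [hMdef, hBB]
      rw [Matrix.sub_mul, Matrix.sub_mul, Matrix.add_mul, Matrix.smul_mul, Matrix.smul_mul,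
        Matrix.smul_mul, Matrix.one_mul, Matrix.add_mul, Matrix.smul_mul, Matrix.one_mul, hLP, hAP]
      ext u k
      simp only [Matrix.sub_apply, Matrix.add_apply, Matrix.smul_apply, Matrix.mul_diagonal,
        smul_eq_mul, hddef]
      ring
    have hdet : M.det = ∏ i : Fin (2*p), d i := by
      have h1 : Pᵀ * (M * P) = Matrix.diagonal (fun k => d (φ k)) := by
        rw [hMP, ← Matrix.mul_assoc, hPtP, Matrix.one_mul]
      have h2 : Pᵀ.det * (M.det * P.det) = ∏ k : Fin p ⊕ Fin p, d (φ k) := by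
        rw [← det_mul, ← det_mul, h1, det_diagonal]
      calc M.det = (Pᵀ.det * P.det) * M.det := by rw [hdetP, one_mul]
        _ = Pᵀ.det * (M.det * P.det) := by ring
        _ = ∏ k : Fin p ⊕ Fin p, d (φ k) := h2
        _ = ∏ i : Fin (2*p), d i := Equiv.prod_comp φ d
    rw [hdet]
    -- scalar algebra
    have hsplit0 : ∏ i : Fin (2*p), d i
        = d i0 * (d i1 * ∏ i ∈ (Finset.univ.erase i0).erase i1, d i) := by
      rw [← Finset.mul_prod_erase Finset.univ d (Finset.mem_univ i0),
        ← Finset.mul_prod_erase _ d (Finset.mem_erase.2 ⟨hi01, Finset.mem_univ i1⟩)]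
    rw [hsplit0]
    have hQ : ∏ i ∈ (Finset.univ.erase i0).erase i1,
          (y ^ 2 - ((p : ℝ) + μ i + 2) * y + 2 * μ i + (p : ℝ))
        = (y - 2) ^ (2 * p - 2) * ∏ i ∈ (Finset.univ.erase i0).erase i1, d i := by
      rw [← hcard, ← Finset.prod_const, ← Finset.prod_mul_distrib]
      apply Finset.prod_congr rfl
      intro i hi
      have hi1' : i ≠ i1 := (Finset.mem_erase.1 hi).1
      have hi0' : i ≠ i0 := (Finset.mem_erase.1 (Finset.mem_erase.1 hi).2).1
      simp only [hddef, hadef, if_neg hi0', if_neg hi1', add_zero]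
      field_simp
      ring
    have hd0 : (y - 2) * d i0 = y * (y - ((p:ℝ) + 2)) := by
      simp only [hddef, hadef, if_pos rfl, hμ0, if_true]
      field_simp
      ring
    have hd1 : d i1 = y - ((p:ℝ) + 2 * r) := by
      have ha1 : a i1 = -(p:ℝ) := by rw [hadef]; simp [hi01]
      simp only [hddef, ha1, hμ1]
      ring
    rw [hd1, hQ]
    have hpow : (y - 2) ^ (p * p) = (y - 2) ^ (p * p - 2 * p + 1) * (y - 2) ^ (2 * p - 2) * (y - 2) := by
      rw [← pow_add, ← pow_succ]
      congr 1
      omega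
    rw [hpow]
    calc (y - 2) ^ (p * p - 2 * p + 1) * (y - 2) ^ (2 * p - 2) * (y - 2) *
          (d i0 * ((y - ((p:ℝ) + 2 * r)) * ∏ i ∈ (Finset.univ.erase i0).erase i1, d i))
        = ((y - 2) * d i0) * (y - ((p:ℝ) + 2 * r)) * (y - 2) ^ (p * p - 2 * p + 1) *
            ((y - 2) ^ (2 * p - 2) * ∏ i ∈ (Finset.univ.erase i0).erase i1, d i) := by ring
      _ = _ := by rw [hd0, ← hQ]
  have hcont1 : Continuous (fun y : ℝ =>
      (y • (1 : Matrix ((Fin p ⊕ Fin p) ⊕ Fin (p * p)) ((Fin p ⊕ Fin p) ⊕ Fin (p * p)) ℝ) -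
        Matrix.fromBlocks (L + (p : ℝ) • 1) (-B) (-Bᵀ) ((2 : ℝ) • 1)).det) := by
    apply Continuous.matrix_det
    exact (continuous_id.smul continuous_const).sub continuous_const
  have hcont2 : Continuous (fun y : ℝ =>
      y * (y - ((p : ℝ) + 2)) * (y - ((p : ℝ) + 2 * (r : ℝ))) *
          (y - 2) ^ (p * p - 2 * p + 1) *
          ∏ i ∈ (Finset.univ.erase i0).erase i1,
            (y ^ 2 - ((p : ℝ) + μ i + 2) * y + 2 * μ i + (p : ℝ))) := by
    apply Continuous.mul
    apply Continuous.mul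
    apply Continuous.mul
    apply Continuous.mul
    · exact continuous_id
    · exact continuous_id.sub continuous_const
    · exact continuous_id.sub continuous_const
    · exact (continuous_id.sub continuous_const).pow _
    · exact continuous_finset_prod _ fun i _ => by continuity
  have hfg := Continuous.ext_on (dense_compl_singleton (2:ℝ)) hcont1 hcont2
      (fun y hy => key y hy)
  exact congrFun hfg x
end
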